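/- Let n ≥ 1 be an integer and let α_1, ..., α_n be real numbers with α_l > −1 for all l. Then ∫_{λ_1 > λ_2 > ... > λ_n > 0} (∏_{k=1}^n e^{−λ_k}) · (∏_{1≤j<k≤n} (λ_j − λ_k)) · det[λ_j^{α_k}]_{j,k=1,...,n} dλ_1⋯dλ_n = (∏_{1≤j<k≤n} (α_j − α_k)) · ∏_{l=1}^n Γ(α_l + 1). -/

import Mathlib

open MeasureTheory Finset Polynomial

namespace Stmt1Aux

noncomputable def phi (c : ℝ) : ℝ → ℝ := (Set.Ioi (0:ℝ)).indicator fun x => x ^ c * Real.exp (-x)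

lemma phi_pos {c x : ℝ} (hx : 0 < x) : phi c x = x ^ c * Real.exp (-x) := by
  simp [phi, Set.indicator_of_mem, Set.mem_Ioi.2 hx]

lemma phi_nonpos {c x : ℝ} (hx : ¬ 0 < x) : phi c x = 0 := by
  simp [phi, Set.indicator_of_notMem, hx]

lemma integrable_phi {c : ℝ} (hc : -1 < c) : Integrable (phi c) := by
  have h := Real.GammaIntegral_convergent (s := c + 1) (by linarith)
  rw [← integrable_indicator_iff measurableSet_Ioi] at h
  apply h.congr
  filter_upwards with x
  unfold phi
  by_cases hx : x ∈ Set.Ioi (0:ℝ)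
  · simp only [Set.indicator_of_mem hx]
    rw [add_sub_cancel_right, mul_comm]
  · simp [Set.indicator_of_notMem hx]

lemma integral_phi {c : ℝ} (hc : -1 < c) : ∫ x, phi c x = Real.Gamma (c + 1) := by
  rw [Real.Gamma_eq_integral (by linarith : (0:ℝ) < c + 1)]
  rw [← integral_indicator measurableSet_Ioi]
  congr 1
  ext x
  unfold phi
  by_cases hx : x ∈ Set.Ioi (0:ℝ)
  · simp only [Set.indicator_of_mem hx]
    rw [add_sub_cancel_right, mul_comm]
  · simp [Set.indicator_of_notMem hx]

variable {n : ℕ}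

def D (n : ℕ) : Set (Fin n → ℝ) :=
  {lam | (∀ i j : Fin n, i < j → lam j < lam i) ∧ ∀ i, 0 < lam i}

def R (σ : Equiv.Perm (Fin n)) : Set (Fin n → ℝ) :=
  {lam | (∀ i j : Fin n, i < j → lam (σ j) < lam (σ i)) ∧ ∀ i, 0 < lam i}

lemma measurableSet_R (σ : Equiv.Perm (Fin n)) : MeasurableSet (R σ) := by
  have h1 : MeasurableSet {lam : Fin n → ℝ | ∀ i j : Fin n, i < j → lam (σ j) < lam (σ i)} := by
    have : {lam : Fin n → ℝ | ∀ i j : Fin n, i < j → lam (σ j) < lam (σ i)}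
        = ⋂ (i : Fin n) (j : Fin n) (_ : i < j), {lam : Fin n → ℝ | lam (σ j) < lam (σ i)} := by
      ext lam; simp only [Set.mem_setOf_eq, Set.mem_iInter]
    rw [this]
    exact MeasurableSet.iInter fun i => MeasurableSet.iInter fun j => MeasurableSet.iInter fun _ =>
      measurableSet_lt (measurable_pi_apply _) (measurable_pi_apply _)
  have h2 : MeasurableSet {lam : Fin n → ℝ | ∀ i, 0 < lam i} := by
    have : {lam : Fin n → ℝ | ∀ i, 0 < lam i} = ⋂ (i : Fin n), {lam : Fin n → ℝ | 0 < lam i} := by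
      ext lam; simp only [Set.mem_setOf_eq, Set.mem_iInter]
    rw [this]
    exact MeasurableSet.iInter fun i => measurableSet_lt measurable_const (measurable_pi_apply _)
  exact h1.inter h2

lemma measurableSet_D : MeasurableSet (D n) := measurableSet_R 1

lemma R_disjoint : Pairwise (Function.onFun Disjoint (R (n := n))) := by
  intro σ τ hst
  rw [Function.onFun, Set.disjoint_left]
  intro lam hσ hτ
  have hfa : StrictAnti (lam ∘ σ) := fun i j h => hσ.1 i j h
  have hga : StrictAnti (lam ∘ τ) := fun i j h => hτ.1 i j h
  have hπ : StrictMono fun i => σ.symm (τ i) := by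
    intro i j h
    have h2 : (lam ∘ σ) (σ.symm (τ j)) < (lam ∘ σ) (σ.symm (τ i)) := by
      simpa using hga h
    exact hfa.lt_iff_gt.mp h2
  have hr : (fun i => σ.symm (τ i)) = id := by
    haveI : WellFoundedLT (Fin n) := inferInstance
    refine (StrictMono.range_inj (β := Fin n) (γ := Fin n) hπ strictMono_id).mp ?_
    rw [Set.range_id]
    exact Function.Surjective.range_eq (σ.symm.surjective.comp τ.surjective)
  apply hst
  ext i
  have h2 : σ.symm (τ i) = i := congrFun hr i
  have h3 : τ i = σ i := (Equiv.symm_apply_eq σ).mp h2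
  exact congrArg Fin.val h3.symm

lemma cover {lam : Fin n → ℝ} (hinj : Function.Injective lam) (hpos : ∀ i, 0 < lam i) :
    ∃ σ, lam ∈ R σ := by
  refine ⟨Fin.revPerm.trans (Tuple.sort lam), ?_, hpos⟩
  have hsm : StrictMono (lam ∘ Tuple.sort lam) :=
    (Tuple.monotone_sort lam).strictMono_of_injective
      (hinj.comp (Tuple.sort lam).injective)
  intro i j hij
  simpa using hsm (Fin.rev_lt_rev.mpr hij)

lemma volume_ne_injective : volume {lam : Fin n → ℝ | ¬ Function.Injective lam} = 0 := by
  have h1 : {lam : Fin n → ℝ | ¬ Function.Injective lam} ⊆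
      ⋃ p : Fin n × Fin n, {lam : Fin n → ℝ | p.1 ≠ p.2 ∧ lam p.1 = lam p.2} := by
    intro lam h
    simp only [Set.mem_setOf_eq, Function.Injective, not_forall] at h
    obtain ⟨a, b, hab, hne⟩ := h
    exact Set.mem_iUnion.2 ⟨(a, b), hne, hab⟩
  refine measure_mono_null h1 (measure_iUnion_null fun p => ?_)
  rcases eq_or_ne p.1 p.2 with h | h
  · have : {lam : Fin n → ℝ | p.1 ≠ p.2 ∧ lam p.1 = lam p.2} = ∅ := by
      ext; simp [h]
    simp [this]
  · set f : (Fin n → ℝ) →ₗ[ℝ] ℝ :=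
      (LinearMap.proj p.1 : (Fin n → ℝ) →ₗ[ℝ] ℝ) - LinearMap.proj p.2 with hf
    have hsub : {lam : Fin n → ℝ | p.1 ≠ p.2 ∧ lam p.1 = lam p.2} ⊆
        (LinearMap.ker f : Set (Fin n → ℝ)) := by
      intro lam hlam
      simp only [SetLike.mem_coe, LinearMap.mem_ker, hf, LinearMap.sub_apply,
        LinearMap.proj_apply, sub_eq_zero]
      exact hlam.2
    refine measure_mono_null hsub (Measure.addHaar_submodule _ _ ?_)
    intro htop
    have h1 : f (Pi.single p.1 1) = 0 := by
      have : Pi.single p.1 1 ∈ LinearMap.ker f := htop ▸ Submodule.mem_top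
      exact LinearMap.mem_ker.mp this
    rw [hf] at h1
    simp only [LinearMap.sub_apply, LinearMap.proj_apply] at h1
    rw [Pi.single_eq_same, Pi.single_eq_of_ne (Ne.symm h)] at h1
    norm_num at h1

lemma setIntegral_orthant_eq_sum (F : (Fin n → ℝ) → ℝ) (hF : Integrable F) :
    ∫ lam in {lam : Fin n → ℝ | ∀ i, 0 < lam i}, F lam
      = ∑ σ : Equiv.Perm (Fin n), ∫ lam in R σ, F lam := by
  have hU : {lam : Fin n → ℝ | ∀ i, 0 < lam i} =ᵐ[volume] ⋃ σ : Equiv.Perm (Fin n), R σ := by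
    rw [MeasureTheory.ae_eq_set]
    constructor
    · refine measure_mono_null ?_ volume_ne_injective
      rintro lam ⟨hpos, hnot⟩
      simp only [Set.mem_setOf_eq]
      intro hinj
      exact hnot (Set.mem_iUnion.2 (cover hinj hpos))
    · have : (⋃ σ : Equiv.Perm (Fin n), R σ) \ {lam : Fin n → ℝ | ∀ i, 0 < lam i} = ∅ := by
        ext lam
        simp only [Set.mem_diff, Set.mem_iUnion, Set.mem_setOf_eq, Set.mem_empty_iff_false,
          iff_false, not_and, not_not]
        rintro ⟨σ, hσ⟩
        exact hσ.2
      simp [this]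
  rw [setIntegral_congr_set hU,
    integral_iUnion measurableSet_R R_disjoint hF.integrableOn,
    tsum_fintype]

lemma integral_R (c : Fin n → ℝ) (σ : Equiv.Perm (Fin n)) :
    ∫ lam in R σ, (∏ i, phi (c i) (lam i))
      = ∫ lam in D n, ∏ i, phi (c (σ i)) (lam i) := by
  have hmp := volume_measurePreserving_piCongrLeft (fun _ : Fin n => ℝ) σ
  set T := MeasurableEquiv.piCongrLeft (fun _ : Fin n => ℝ) σ with hT
  have hTa : ∀ (x : Fin n → ℝ) (i : Fin n), T x (σ i) = x i := by
    intro x i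
    rw [hT, MeasurableEquiv.coe_piCongrLeft]
    exact Equiv.piCongrLeft_apply_apply (fun _ => ℝ) σ x i
  have hpre : T ⁻¹' (R σ) = D n := by
    ext x
    simp only [Set.mem_preimage, R, D, Set.mem_setOf_eq]
    constructor
    · rintro ⟨h1, h2⟩
      refine ⟨fun i j hij => ?_, fun i => ?_⟩
      · have := h1 i j hij
        rwa [hTa, hTa] at this
      · have := h2 (σ i)
        rwa [hTa] at this
    · rintro ⟨h1, h2⟩
      refine ⟨fun i j hij => ?_, fun i => ?_⟩
      · rw [hTa, hTa]; exact h1 i j hij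
      · have : T x (σ (σ.symm i)) = x (σ.symm i) := hTa x (σ.symm i)
        rw [Equiv.apply_symm_apply] at this
        rw [this]; exact h2 _
  rw [← hmp.setIntegral_preimage_emb (MeasurableEquiv.measurableEmbedding _)
      (fun lam => ∏ i, phi (c i) (lam i)) (R σ), hpre]
  apply setIntegral_congr_fun measurableSet_D
  intro x _
  calc (∏ i, phi (c i) (T x i)) = ∏ i, phi (c (σ i)) (T x (σ i)) :=
        (Equiv.prod_comp σ fun i => phi (c i) (T x i)).symm
    _ = ∏ i, phi (c (σ i)) (x i) := by simp only [hTa]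

lemma integral_orthant (c : Fin n → ℝ) (hc : ∀ i, -1 < c i) :
    ∑ σ : Equiv.Perm (Fin n), ∫ lam in D n, (∏ i, phi (c (σ i)) (lam i))
      = ∏ i, Real.Gamma (c i + 1) := by
  have hint : Integrable fun lam : Fin n → ℝ => ∏ i, phi (c i) (lam i) :=
    Integrable.fintype_prod (f := fun i => phi (c i)) fun i => integrable_phi (hc i)
  have h0 : ∀ lam : Fin n → ℝ, lam ∉ {lam : Fin n → ℝ | ∀ i, 0 < lam i} →
      ∏ i, phi (c i) (lam i) = 0 := by
    intro lam hlam
    simp only [Set.mem_setOf_eq, not_forall] at hlam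
    obtain ⟨i, hi⟩ := hlam
    exact Finset.prod_eq_zero (Finset.mem_univ i) (phi_nonpos hi)
  calc ∑ σ : Equiv.Perm (Fin n), ∫ lam in D n, (∏ i, phi (c (σ i)) (lam i))
      = ∑ σ : Equiv.Perm (Fin n), ∫ lam in R σ, ∏ i, phi (c i) (lam i) :=
        Finset.sum_congr rfl fun σ _ => (integral_R c σ).symm
    _ = ∫ lam in {lam : Fin n → ℝ | ∀ i, 0 < lam i}, ∏ i, phi (c i) (lam i) :=
        (setIntegral_orthant_eq_sum _ hint).symm
    _ = ∫ lam : Fin n → ℝ, ∏ i, phi (c i) (lam i) := setIntegral_eq_integral_of_forall_compl_eq_zero h0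
    _ = ∏ i, ∫ x : ℝ, phi (c i) x := integral_fintype_prod_eq_prod (fun i => phi (c i))
    _ = ∏ i, Real.Gamma (c i + 1) := Finset.prod_congr rfl fun i _ => integral_phi (hc i)

lemma Gamma_add_nat (x : ℝ) (hx : 0 < x) (m : ℕ) :
    Real.Gamma (x + m) = Real.Gamma x * ∏ t ∈ Finset.range m, (x + t) := by
  induction m with
  | zero => simp
  | succ m ih =>
    have hxm : (0:ℝ) < x + m := by positivity
    have h : x + (m + 1 : ℕ) = (x + m) + 1 := by push_cast; ring
    rw [h, Real.Gamma_add_one hxm.ne', ih, Finset.prod_range_succ]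
    ring

lemma prod_Ioi_rev {M : Type*} [CommMonoid M] {n : ℕ} (g : Fin n → Fin n → M) :
    ∏ j, ∏ k ∈ Finset.Ioi j, g j k = ∏ j, ∏ k ∈ Finset.Ioi j, g (Fin.rev k) (Fin.rev j) := by
  rw [show (∏ j, ∏ k ∈ Finset.Ioi j, g j k)
        = ∏ p ∈ Finset.univ.sigma (fun j => Finset.Ioi j), g p.1 p.2
       from (Finset.prod_sigma Finset.univ (fun j => Finset.Ioi j) (fun p => g p.1 p.2)).symm,
     show (∏ j, ∏ k ∈ Finset.Ioi j, g (Fin.rev k) (Fin.rev j))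
        = ∏ p ∈ Finset.univ.sigma (fun j => Finset.Ioi j), g (Fin.rev p.2) (Fin.rev p.1)
       from (Finset.prod_sigma Finset.univ (fun j => Finset.Ioi j)
         (fun p => g (Fin.rev p.2) (Fin.rev p.1))).symm]
  refine Finset.prod_nbij' (fun p => ⟨p.2.rev, p.1.rev⟩) (fun p => ⟨p.2.rev, p.1.rev⟩) ?_ ?_ ?_ ?_ ?_
  · rintro ⟨a, b⟩ h
    simp only [Finset.mem_sigma, Finset.mem_univ, Finset.mem_Ioi, true_and] at h ⊢
    exact Fin.rev_lt_rev.mpr h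
  · rintro ⟨a, b⟩ h
    simp only [Finset.mem_sigma, Finset.mem_univ, Finset.mem_Ioi, true_and] at h ⊢
    exact Fin.rev_lt_rev.mpr h
  · rintro ⟨a, b⟩ _; simp [Fin.rev_rev]
  · rintro ⟨a, b⟩ _; simp [Fin.rev_rev]
  · rintro ⟨a, b⟩ _; simp [Fin.rev_rev]

lemma det_gamma (n : ℕ) (α : Fin n → ℝ) (hα : ∀ l, -1 < α l) :
    ∑ ρ : Equiv.Perm (Fin n), ((Equiv.Perm.sign ρ : ℤ) : ℝ) *
        ∏ i, Real.Gamma ((((Fin.rev i) : Fin n) : ℕ) + α (ρ i) + 1)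
      = (∏ j, ∏ k ∈ Finset.Ioi j, (α j - α k)) * ∏ l, Real.Gamma (α l + 1) := by
  classical
  set p : ℕ → ℝ[X] := fun m => ∏ t ∈ Finset.range m, (X + C ((t : ℝ) + 1)) with hp
  have hmonic : ∀ m, (p m).Monic := fun m =>
    monic_prod_of_monic _ _ fun t _ => monic_X_add_C _
  have hdeg : ∀ m, (p m).natDegree = m := by
    intro m
    show (∏ t ∈ Finset.range m, (X + C ((t : ℝ) + 1))).natDegree = m
    have h2 := Polynomial.natDegree_prod (Finset.range m) (fun t : ℕ => X + C ((t : ℝ) + 1))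
      (fun t _ => (monic_X_add_C ((t:ℝ)+1)).ne_zero)
    rw [h2]
    simp only [Polynomial.natDegree_X_add_C, Finset.sum_const, Finset.card_range, smul_eq_mul,
      mul_one]
  have heval : ∀ (x : ℝ) (m : ℕ), (p m).eval x = ∏ t ∈ Finset.range m, (x + (t + 1)) := by
    intro x m
    rw [hp, Polynomial.eval_prod]
    exact Finset.prod_congr rfl fun t _ => by simp
  have hentry : ∀ (k i : Fin n),
      Real.Gamma ((((Fin.rev i) : Fin n) : ℕ) + α k + 1)
        = Real.Gamma (α k + 1) * (p ((Fin.rev i : Fin n) : ℕ)).eval (α k) := by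
    intro k i
    have h1 : ((((Fin.rev i) : Fin n) : ℕ) : ℝ) + α k + 1 = (α k + 1) + (((Fin.rev i : Fin n) : ℕ) : ℝ) := by ring
    rw [h1, Gamma_add_nat (α k + 1) (by linarith [hα k]) _, heval]
    congr 1
    exact Finset.prod_congr rfl fun t _ => by ring
  -- express the sum as a determinant
  have hdet : (∑ ρ : Equiv.Perm (Fin n), ((Equiv.Perm.sign ρ : ℤ) : ℝ) *
        ∏ i, Real.Gamma ((((Fin.rev i) : Fin n) : ℕ) + α (ρ i) + 1))
      = (Matrix.of fun k i : Fin n =>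
          Real.Gamma ((((Fin.rev i) : Fin n) : ℕ) + α k + 1)).det := by
    rw [Matrix.det_apply']
    exact Finset.sum_congr rfl fun ρ _ => rfl
  rw [hdet]
  -- factor out the Gamma values
  have hfac : (Matrix.of fun k i : Fin n =>
        Real.Gamma ((((Fin.rev i) : Fin n) : ℕ) + α k + 1))
      = (Matrix.diagonal fun k => Real.Gamma (α k + 1)) *
        (Matrix.of fun k i : Fin n => (p ((Fin.rev i : Fin n) : ℕ)).eval (α k)) := by
    ext k i
    rw [Matrix.diagonal_mul]
    exact hentry k i
  rw [hfac, Matrix.det_mul, Matrix.det_diagonal]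
  -- compute the remaining determinant
  have hsub : (Matrix.of fun k i : Fin n => (p ((Fin.rev i : Fin n) : ℕ)).eval (α k)).det
      = (Matrix.of fun k i : Fin n => (p (i : ℕ)).eval (α (Fin.rev k))).det := by
    rw [← Matrix.det_submatrix_equiv_self Fin.revPerm
        (Matrix.of fun k i : Fin n => (p ((Fin.rev i : Fin n) : ℕ)).eval (α k))]
    congr 1
    ext k i
    simp only [Matrix.submatrix_apply, Matrix.of_apply, Fin.revPerm_apply, Fin.rev_rev]
  rw [hsub]
  have hvdm : (Matrix.of fun k i : Fin n => (p (i : ℕ)).eval (α (Fin.rev k))).det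
      = (Matrix.vandermonde fun k => α (Fin.rev k)).det := by
    rw [Matrix.det_eval_matrixOfPolynomials_eq_det_vandermonde (fun k => α (Fin.rev k))
      (fun i => p (i : ℕ)) (fun i => hdeg _) (fun i => hmonic _)]
  rw [hvdm, Matrix.det_vandermonde]
  rw [show (∏ j, ∏ k ∈ Finset.Ioi j, (α j - α k))
      = ∏ j, ∏ k ∈ Finset.Ioi j, (α (Fin.rev k) - α (Fin.rev j)) by
    rw [prod_Ioi_rev (fun a b => α a - α b)]]
  ring

lemma pointwise (n : ℕ) (α : Fin n → ℝ) (lam : Fin n → ℝ) (hpos : ∀ i, 0 < lam i) :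
    (∏ k, Real.exp (-lam k)) * (∏ j, ∏ k ∈ Finset.Ioi j, (lam j - lam k)) *
        (Matrix.of fun j k : Fin n => lam j ^ α k).det
      = ∑ σ : Equiv.Perm (Fin n), ∑ τ : Equiv.Perm (Fin n),
          (((Equiv.Perm.sign σ : ℤ) : ℝ) * ((Equiv.Perm.sign τ : ℤ) : ℝ)) *
            ∏ i, phi ((((σ (Fin.rev i) : Fin n) : ℕ) : ℝ) + α (τ i)) (lam i) := by
  classical
  have hV : (∏ j, ∏ k ∈ Finset.Ioi j, (lam j - lam k))
      = (Matrix.vandermonde fun i => lam (Fin.rev i)).det := by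
    rw [Matrix.det_vandermonde, prod_Ioi_rev (fun a b => lam a - lam b)]
  rw [hV, Matrix.det_apply', Matrix.det_apply']
  rw [mul_assoc, Finset.sum_mul_sum]
  simp only [Finset.mul_sum]
  refine Fintype.sum_equiv (Equiv.inv (Equiv.Perm (Fin n))) _ _ fun σ => ?_
  refine Fintype.sum_equiv (Equiv.inv (Equiv.Perm (Fin n))) _ _ fun τ => ?_
  simp only [Equiv.inv_apply]
  have hA : (∏ i, Matrix.vandermonde (fun i => lam (Fin.rev i)) (σ i) i)
      = ∏ i, lam i ^ (((σ⁻¹ (Fin.rev i) : Fin n) : ℕ)) := by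
    rw [← Equiv.prod_comp (σ.trans Fin.revPerm)
      (fun i => lam i ^ (((σ⁻¹ (Fin.rev i) : Fin n) : ℕ)))]
    refine Finset.prod_congr rfl fun i _ => ?_
    simp only [Matrix.vandermonde_apply, Equiv.trans_apply, Fin.revPerm_apply, Fin.rev_rev,
      Equiv.Perm.inv_def, Equiv.symm_apply_apply]
  have hB : (∏ i, (Matrix.of fun j k : Fin n => lam j ^ α k) (τ i) i)
      = ∏ i, lam i ^ α (τ⁻¹ i) := by
    rw [← Equiv.prod_comp τ (fun i => lam i ^ α (τ⁻¹ i))]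
    refine Finset.prod_congr rfl fun i _ => ?_
    simp only [Matrix.of_apply, Equiv.Perm.inv_def, Equiv.symm_apply_apply]
  have hC : (∏ i, phi ((((σ⁻¹ (Fin.rev i) : Fin n) : ℕ) : ℝ) + α (τ⁻¹ i)) (lam i))
      = (∏ i, lam i ^ (((σ⁻¹ (Fin.rev i) : Fin n) : ℕ)))
        * ((∏ i, lam i ^ α (τ⁻¹ i)) * ∏ i, Real.exp (-lam i)) := by
    rw [← Finset.prod_mul_distrib, ← Finset.prod_mul_distrib]
    refine Finset.prod_congr rfl fun i _ => ?_
    rw [phi_pos (hpos i), Real.rpow_add (hpos i), Real.rpow_natCast]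
    ring
  rw [hA, hB, hC, Equiv.Perm.sign_inv, Equiv.Perm.sign_inv]
  ring


lemma revPerm_mul_self {n : ℕ} : (Fin.revPerm : Equiv.Perm (Fin n)) * Fin.revPerm = 1 := by
  ext i
  simp [Equiv.Perm.mul_apply, Fin.rev_rev]

lemma double_sum_reindex {M : Type*} [AddCommMonoid M] {n : ℕ}
    (F : Equiv.Perm (Fin n) → Equiv.Perm (Fin n) → M) :
    ∑ σ : Equiv.Perm (Fin n), ∑ τ : Equiv.Perm (Fin n), F σ τ
      = ∑ π : Equiv.Perm (Fin n), ∑ ρ : Equiv.Perm (Fin n),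
          F (Fin.revPerm * π * Fin.revPerm) (ρ * π) := by
  classical
  refine (Fintype.sum_equiv ((Equiv.mulLeft (Fin.revPerm : Equiv.Perm (Fin n))).trans
      (Equiv.mulRight (Fin.revPerm : Equiv.Perm (Fin n))))
    (fun π => ∑ ρ : Equiv.Perm (Fin n), F (Fin.revPerm * π * Fin.revPerm) (ρ * π))
    (fun σ => ∑ τ : Equiv.Perm (Fin n), F σ τ) (fun π => ?_)).symm
  simp only [Equiv.trans_apply, Equiv.coe_mulLeft, Equiv.coe_mulRight]
  exact Fintype.sum_equiv (Equiv.mulRight π)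
    (fun ρ => F (Fin.revPerm * π * Fin.revPerm) (ρ * π))
    (fun τ => F (Fin.revPerm * π * Fin.revPerm) τ) (fun ρ => rfl)

lemma sign_conj_rev {n : ℕ} (π : Equiv.Perm (Fin n)) :
    Equiv.Perm.sign ((Fin.revPerm : Equiv.Perm (Fin n)) * π * Fin.revPerm) = Equiv.Perm.sign π := by
  rw [map_mul, map_mul,
    mul_comm (Equiv.Perm.sign (Fin.revPerm : Equiv.Perm (Fin n))) (Equiv.Perm.sign π),
    mul_assoc, Int.units_mul_self, mul_one]

end Stmt1Aux

open Stmt1Aux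

/-- normalization identity of the Laguerre upper-triangular ensemble. -/
theorem stmt_1 (n : ℕ) (hn : 1 ≤ n) (α : Fin n → ℝ) (hα : ∀ l, -1 < α l) :
    ∫ lam in {lam : Fin n → ℝ | (∀ i j : Fin n, i < j → lam j < lam i) ∧ ∀ i, 0 < lam i},
      (∏ k, Real.exp (-lam k)) * (∏ j, ∏ k ∈ Finset.Ioi j, (lam j - lam k)) *
        (Matrix.of fun j k : Fin n => lam j ^ α k).det
    = (∏ j, ∏ k ∈ Finset.Ioi j, (α j - α k)) * ∏ l, Real.Gamma (α l + 1) := by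
  classical
  have hint : ∀ (c : Fin n → ℝ), (∀ i, -1 < c i) →
      Integrable fun lam : Fin n → ℝ => ∏ i, phi (c i) (lam i) := fun c hc =>
    Integrable.fintype_prod (f := fun i => phi (c i)) fun i => integrable_phi (hc i)
  have hcpos : ∀ (σ τ : Equiv.Perm (Fin n)) (i : Fin n),
      (-1:ℝ) < (((σ (Fin.rev i) : Fin n) : ℕ) : ℝ) + α (τ i) := by
    intro σ τ i
    have h1 := hα (τ i)
    have h2 : (0:ℝ) ≤ (((σ (Fin.rev i) : Fin n) : ℕ) : ℝ) := Nat.cast_nonneg _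
    linarith
  calc ∫ lam in {lam : Fin n → ℝ | (∀ i j : Fin n, i < j → lam j < lam i) ∧ ∀ i, 0 < lam i},
      (∏ k, Real.exp (-lam k)) * (∏ j, ∏ k ∈ Finset.Ioi j, (lam j - lam k)) *
        (Matrix.of fun j k : Fin n => lam j ^ α k).det
      = ∫ lam in D n, ∑ σ : Equiv.Perm (Fin n), ∑ τ : Equiv.Perm (Fin n),
          (((Equiv.Perm.sign σ : ℤ) : ℝ) * ((Equiv.Perm.sign τ : ℤ) : ℝ)) *
            ∏ i, phi ((((σ (Fin.rev i) : Fin n) : ℕ) : ℝ) + α (τ i)) (lam i) :=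
        setIntegral_congr_fun measurableSet_D fun lam hlam => pointwise n α lam hlam.2
    _ = ∑ σ : Equiv.Perm (Fin n), ∑ τ : Equiv.Perm (Fin n),
          (((Equiv.Perm.sign σ : ℤ) : ℝ) * ((Equiv.Perm.sign τ : ℤ) : ℝ)) *
            ∫ lam in D n, ∏ i, phi ((((σ (Fin.rev i) : Fin n) : ℕ) : ℝ) + α (τ i)) (lam i) := by
        rw [integral_finset_sum _ (fun σ _ => integrable_finset_sum _ (fun τ _ =>
          ((hint _ (hcpos σ τ)).const_mul _).integrableOn))]
        refine Finset.sum_congr rfl fun σ _ => ?_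
        rw [integral_finset_sum _ (fun τ _ => ((hint _ (hcpos σ τ)).const_mul _).integrableOn)]
        exact Finset.sum_congr rfl fun τ _ => integral_const_mul _ _
    _ = ∑ π : Equiv.Perm (Fin n), ∑ ρ : Equiv.Perm (Fin n),
          (((Equiv.Perm.sign ρ : ℤ) : ℝ)) *
            ∫ lam in D n, ∏ i, phi (((((Fin.rev (π i)) : Fin n) : ℕ) : ℝ) + α (ρ (π i))) (lam i) := by
        rw [double_sum_reindex]
        refine Finset.sum_congr rfl fun π _ => Finset.sum_congr rfl fun ρ _ => ?_
        have hsign : ((Equiv.Perm.sign ((Fin.revPerm : Equiv.Perm (Fin n)) * π * Fin.revPerm) : ℤ) : ℝ)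
            * ((Equiv.Perm.sign (ρ * π) : ℤ) : ℝ) = ((Equiv.Perm.sign ρ : ℤ) : ℝ) := by
          rw [sign_conj_rev, map_mul]
          push_cast
          rcases Int.units_eq_one_or (Equiv.Perm.sign π) with h | h <;>
            rcases Int.units_eq_one_or (Equiv.Perm.sign ρ) with h2 | h2 <;>
            simp [h, h2]
        rw [hsign]
        simp only [Equiv.Perm.mul_apply, Fin.revPerm_apply, Fin.rev_rev]
    _ = ∑ ρ : Equiv.Perm (Fin n), (((Equiv.Perm.sign ρ : ℤ) : ℝ)) *
          ∏ i, Real.Gamma (((((Fin.rev i) : Fin n) : ℕ) : ℝ) + α (ρ i) + 1) := by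
        rw [Finset.sum_comm]
        refine Finset.sum_congr rfl fun ρ _ => ?_
        rw [← Finset.mul_sum]
        congr 1
        exact integral_orthant (fun j => ((((Fin.rev j) : Fin n) : ℕ) : ℝ) + α (ρ j))
          (fun i => by
            show (-1:ℝ) < ((((Fin.rev i) : Fin n) : ℕ) : ℝ) + α (ρ i)
            have h1 := hα (ρ i)
            have h2 : (0:ℝ) ≤ ((((Fin.rev i) : Fin n) : ℕ) : ℝ) := Nat.cast_nonneg _
            linarith)
    _ = (∏ j, ∏ k ∈ Finset.Ioi j, (α j - α k)) * ∏ l, Real.Gamma (α l + 1) :=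
        det_gamma n α hα
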